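/- The Zariski closure in ℂ⁴ × ℂ of the image of the map (t, λ) ↦ (1, t, λt², λ²t³, λ) from ℂ* × ℂ equals the Zariski closure of the image of (t, λ) ↦ (λ, t, t², t³, λ); both are cut out (as affine cones over ℙ³ × ℂ) by the equations x₀x₂ − ηx₁² = 0, x₁x₃ − x₂² = 0, x₀x₃ − ηx₁x₂ = 0. -/

import Mathlib

set_option maxHeartbeats 1000000
open MvPolynomial

private def SF' : Set (Fin 5 → ℂ) :=
  {p | ∃ c t lam : ℂ, c ≠ 0 ∧ t ≠ 0 ∧ p = ![c, c * t, c * lam * t ^ 2, c * lam ^ 2 * t ^ 3, lam]}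

private def SG' : Set (Fin 5 → ℂ) :=
  {p | ∃ c t lam : ℂ, c ≠ 0 ∧ t ≠ 0 ∧ p = ![c * lam, c * t, c * t ^ 2, c * t ^ 3, lam]}

private lemma key5 (S : Set (Fin 5 → ℂ)) (f : MvPolynomial (Fin 5) ℂ)
    (hf : ∀ y ∈ S, eval y f = 0) (x : Fin 5 → ℂ) (γ : ℂ → Fin 5 → ℂ) (hγc : Continuous γ)
    (hγ : ∀ u : ℂ, u ≠ 0 → γ u ∈ S) (h0 : γ 0 = x) : eval x f = 0 := by
  subst h0
  have hcont : Continuous fun u => eval (γ u) f := f.continuous_eval.comp hγc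
  have hcl : IsClosed {u : ℂ | eval (γ u) f = 0} := isClosed_eq hcont continuous_const
  have hdense : Dense ({0}ᶜ : Set ℂ) := dense_compl_singleton 0
  have h : closure ({0}ᶜ : Set ℂ) ⊆ {u : ℂ | eval (γ u) f = 0} :=
    closure_minimal (fun u hu => hf _ (hγ u hu)) hcl
  exact h (hdense.closure_eq ▸ Set.mem_univ 0)

private lemma dense_SF (x : Fin 5 → ℂ)
    (h1 : x 0 * x 2 - x 4 * x 1 ^ 2 = 0) (h2 : x 1 * x 3 - x 2 ^ 2 = 0)
    (h3 : x 0 * x 3 - x 4 * (x 1 * x 2) = 0)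
    (f : MvPolynomial (Fin 5) ℂ)
    (hf : ∀ y ∈ SF', eval y f = 0) : eval x f = 0 := by
  by_cases hb : x 1 = 0
  · -- b = 0 ⇒ c = 0
    have hc : x 2 = 0 := by
      have : x 2 ^ 2 = 0 := by linear_combination -h2 + x 3 * hb
      exact pow_eq_zero_iff (by norm_num) |>.mp this
    by_cases hd : x 3 = 0
    · by_cases ha : x 0 = 0
      · -- x = (0,0,0,0,e)
        refine key5 SF' f hf x (fun u => ![u, u^2, x 4 * u^3, x 4^2 * u^4, x 4]) ?_ ?_ ?_
        · refine continuous_pi fun i => ?_; fin_cases i <;> simp <;> fun_prop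
        · intro u hu
          exact ⟨u, u, x 4, hu, hu, by funext i; fin_cases i <;> simp <;> ring⟩
        · funext i; fin_cases i <;> simp [ha, hb, hc, hd]
      · -- x = (a,0,0,0,e), a ≠ 0
        refine key5 SF' f hf x
          (fun u => ![x 0, x 0 * u, x 0 * x 4 * u^2, x 0 * x 4^2 * u^3, x 4]) ?_ ?_ ?_
        · refine continuous_pi fun i => ?_; fin_cases i <;> simp <;> fun_prop
        · intro u hu
          exact ⟨x 0, u, x 4, ha, hu, by funext i; fin_cases i <;> simp <;> ring⟩
        · funext i; fin_cases i <;> simp [hb, hc, hd]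
    · -- d ≠ 0 ⇒ a = 0
      have ha : x 0 = 0 := by
        have : x 0 * x 3 = 0 := by linear_combination h3 + x 4 * x 2 * hb
        rcases mul_eq_zero.mp this with h | h
        · exact h
        · exact absurd h hd
      by_cases he : x 4 = 0
      · -- x = (0,0,0,d,0), curve (d u⁴, d u², d u, d, u)
        refine key5 SF' f hf x
          (fun u => ![x 3 * u^4, x 3 * u^2, x 3 * u, x 3, u]) ?_ ?_ ?_
        · refine continuous_pi fun i => ?_; fin_cases i <;> simp <;> fun_prop
        · intro u hu
          refine ⟨x 3 * u^4, (u^2)⁻¹, u, mul_ne_zero hd (pow_ne_zero _ hu),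
            inv_ne_zero (pow_ne_zero _ hu), ?_⟩
          funext i; fin_cases i <;> field_simp <;> ring
        · funext i; fin_cases i <;> simp [ha, hb, hc, he]
      · -- x = (0,0,0,d,e), e ≠ 0, curve (d/e² u³, d/e² u², d/e u, d, e)
        refine key5 SF' f hf x
          (fun u => ![x 3 / x 4^2 * u^3, x 3 / x 4^2 * u^2, x 3 / x 4 * u, x 3, x 4]) ?_ ?_ ?_
        · refine continuous_pi fun i => ?_; fin_cases i <;> simp <;> fun_prop
        · intro u hu
          refine ⟨x 3 / x 4^2 * u^3, u⁻¹, x 4,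
            mul_ne_zero (div_ne_zero hd (pow_ne_zero _ he)) (pow_ne_zero _ hu),
            inv_ne_zero hu, ?_⟩
          funext i; fin_cases i <;> field_simp <;> ring
        · funext i; fin_cases i <;> simp [ha, hb, hc]
  · -- b ≠ 0
    by_cases hc : x 2 = 0
    · -- c = 0 ⇒ d = 0, e = 0
      have hd : x 3 = 0 := by
        have : x 1 * x 3 = 0 := by linear_combination h2 + x 2 * hc
        rcases mul_eq_zero.mp this with h | h
        · exact absurd h hb
        · exact h
      have he : x 4 = 0 := by
        have : x 4 * x 1 ^ 2 = 0 := by linear_combination -h1 + x 0 * hc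
        rcases mul_eq_zero.mp this with h | h
        · exact h
        · exact absurd (pow_eq_zero_iff (by norm_num) |>.mp h) hb
      by_cases ha : x 0 = 0
      · -- x = (0,b,0,0,0), curve (u b, b, u b, u² b, u²)
        refine key5 SF' f hf x
          (fun u => ![u * x 1, x 1, u * x 1, u^2 * x 1, u^2]) ?_ ?_ ?_
        · refine continuous_pi fun i => ?_; fin_cases i <;> simp <;> fun_prop
        · intro u hu
          refine ⟨u * x 1, u⁻¹, u^2, mul_ne_zero hu hb, inv_ne_zero hu, ?_⟩
          funext i; fin_cases i <;> field_simp <;> ring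
        · funext i; fin_cases i <;> simp [ha, hc, hd, he]
      · -- x = (a,b,0,0,0), a ≠ 0, curve (a, b, u b²/a, u² b³/a², u)
        refine key5 SF' f hf x
          (fun u => ![x 0, x 1, u * x 1^2 / x 0, u^2 * x 1^3 / x 0^2, u]) ?_ ?_ ?_
        · refine continuous_pi fun i => ?_; fin_cases i <;> simp <;> fun_prop
        · intro u hu
          refine ⟨x 0, x 1 / x 0, u, ha, div_ne_zero hb ha, ?_⟩
          funext i; fin_cases i <;> field_simp <;> ring
        · funext i; fin_cases i <;> simp [hc, hd, he]
    · -- b ≠ 0, c ≠ 0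
      by_cases he : x 4 = 0
      · -- a = 0, curve (u b²/c, b, c, c²/b, u)
        have ha : x 0 = 0 := by
          have : x 0 * x 2 = 0 := by linear_combination h1 + x 1^2 * he
          rcases mul_eq_zero.mp this with h | h
          · exact h
          · exact absurd h hc
        have hd : x 3 = x 2^2 / x 1 := by field_simp; linear_combination h2
        refine key5 SF' f hf x
          (fun u => ![u * x 1^2 / x 2, x 1, x 2, x 2^2 / x 1, u]) ?_ ?_ ?_
        · refine continuous_pi fun i => ?_; fin_cases i <;> simp <;> fun_prop
        · intro u hu
          refine ⟨u * x 1^2 / x 2, x 2 / (x 1 * u), u,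
            div_ne_zero (mul_ne_zero hu (pow_ne_zero _ hb)) hc,
            div_ne_zero hc (mul_ne_zero hb hu), ?_⟩
          funext i; fin_cases i <;> field_simp <;> ring
        · funext i; fin_cases i <;> simp [ha, hd, he]
      · -- x ∈ SF' directly: a ≠ 0
        have ha : x 0 ≠ 0 := by
          intro h
          apply he
          have h1' : x 4 * x 1 ^ 2 = 0 := by linear_combination -h1 + x 2 * h
          rcases mul_eq_zero.mp h1' with h' | h'
          · exact h'
          · exact absurd (pow_eq_zero_iff (by norm_num) |>.mp h') hb
        have e1 : x 1 = x 0 * (x 1 / x 0) := by field_simp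
        have e2 : x 2 = x 0 * x 4 * (x 1 / x 0)^2 := by
          field_simp; linear_combination h1
        have e3 : x 3 = x 0 * x 4^2 * (x 1 / x 0)^3 := by
          field_simp; linear_combination x 0 * h3 + x 4 * x 1 * h1
        apply hf
        refine ⟨x 0, x 1 / x 0, x 4, ha, div_ne_zero hb ha, ?_⟩
        funext i; fin_cases i <;> simp [← e1, ← e2, ← e3]
private lemma dense_SG (x : Fin 5 → ℂ)
    (h1 : x 0 * x 2 - x 4 * x 1 ^ 2 = 0) (h2 : x 1 * x 3 - x 2 ^ 2 = 0)
    (h3 : x 0 * x 3 - x 4 * (x 1 * x 2) = 0)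
    (f : MvPolynomial (Fin 5) ℂ)
    (hf : ∀ y ∈ SG', eval y f = 0) : eval x f = 0 := by
  by_cases hb : x 1 = 0
  · have hc : x 2 = 0 := by
      have : x 2 ^ 2 = 0 := by linear_combination -h2 + x 3 * hb
      exact pow_eq_zero_iff (by norm_num) |>.mp this
    by_cases hd : x 3 = 0
    · by_cases ha : x 0 = 0
      · refine key5 SG' f hf x (fun u => ![u * x 4, u^2, u^3, u^4, x 4]) ?_ ?_ ?_
        · refine continuous_pi fun i => ?_; fin_cases i <;> simp <;> fun_prop
        · intro u hu
          exact ⟨u, u, x 4, hu, hu, by funext i; fin_cases i <;> simp <;> ring⟩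
        · funext i; fin_cases i <;> simp [ha, hb, hc, hd]
      · by_cases he : x 4 = 0
        · -- x = (a,0,0,0,0), a ≠ 0, curve (a, a u, a u³, a u⁵, u)
          refine key5 SG' f hf x
            (fun u => ![x 0, x 0 * u, x 0 * u^3, x 0 * u^5, u]) ?_ ?_ ?_
          · refine continuous_pi fun i => ?_; fin_cases i <;> simp <;> fun_prop
          · intro u hu
            refine ⟨x 0 / u, u^2, u, div_ne_zero ha hu, pow_ne_zero _ hu, ?_⟩
            funext i; fin_cases i <;> field_simp <;> ring
          · funext i; fin_cases i <;> simp [hb, hc, hd, he]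
        · -- x = (a,0,0,0,e), a,e ≠ 0
          refine key5 SG' f hf x
            (fun u => ![x 0, x 0 / x 4 * u, x 0 / x 4 * u^2, x 0 / x 4 * u^3, x 4]) ?_ ?_ ?_
          · refine continuous_pi fun i => ?_; fin_cases i <;> simp <;> fun_prop
          · intro u hu
            refine ⟨x 0 / x 4, u, x 4, div_ne_zero ha he, hu, ?_⟩
            funext i; fin_cases i <;> field_simp <;> ring
          · funext i; fin_cases i <;> simp [hb, hc, hd]
    · -- d ≠ 0 ⇒ a = 0
      have ha : x 0 = 0 := by
        have : x 0 * x 3 = 0 := by linear_combination h3 + x 4 * x 2 * hb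
        rcases mul_eq_zero.mp this with h | h
        · exact h
        · exact absurd h hd
      refine key5 SG' f hf x
        (fun u => ![x 3 * x 4 * u^3, x 3 * u^2, x 3 * u, x 3, x 4]) ?_ ?_ ?_
      · refine continuous_pi fun i => ?_; fin_cases i <;> simp <;> fun_prop
      · intro u hu
        refine ⟨x 3 * u^3, u⁻¹, x 4, mul_ne_zero hd (pow_ne_zero _ hu), inv_ne_zero hu, ?_⟩
        funext i; fin_cases i <;> field_simp <;> ring
      · funext i; fin_cases i <;> simp [ha, hb, hc]
  · by_cases hc : x 2 = 0
    · -- b ≠ 0, c = 0 ⇒ d = 0, e = 0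
      have hd : x 3 = 0 := by
        have : x 1 * x 3 = 0 := by linear_combination h2 + x 2 * hc
        rcases mul_eq_zero.mp this with h | h
        · exact absurd h hb
        · exact h
      have he : x 4 = 0 := by
        have : x 4 * x 1 ^ 2 = 0 := by linear_combination -h1 + x 0 * hc
        rcases mul_eq_zero.mp this with h | h
        · exact h
        · exact absurd (pow_eq_zero_iff (by norm_num) |>.mp h) hb
      refine key5 SG' f hf x
        (fun u => ![x 0, x 1, x 1 * u, x 1 * u^2, u * x 0 / x 1]) ?_ ?_ ?_
      · refine continuous_pi fun i => ?_; fin_cases i <;> simp <;> fun_prop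
      · intro u hu
        refine ⟨x 1 / u, u, u * x 0 / x 1, div_ne_zero hb hu, hu, ?_⟩
        funext i; fin_cases i <;> field_simp <;> ring
      · funext i; fin_cases i <;> simp [hc, hd, he]
    · -- b ≠ 0, c ≠ 0 : x ∈ SG' directly
      have e0 : x 0 = x 1^2 / x 2 * x 4 := by
        field_simp; linear_combination h1
      have e1 : x 1 = x 1^2 / x 2 * (x 2 / x 1) := by field_simp
      have e2 : x 2 = x 1^2 / x 2 * (x 2 / x 1)^2 := by field_simp
      have e3 : x 3 = x 1^2 / x 2 * (x 2 / x 1)^3 := by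
        field_simp; linear_combination h2
      apply hf
      refine ⟨x 1^2 / x 2, x 2 / x 1, x 4, div_ne_zero (pow_ne_zero _ hb) hc,
        div_ne_zero hc hb, ?_⟩
      funext i; fin_cases i <;> simp [← e0, ← e1, ← e2, ← e3]

private def V' : Set (Fin 5 → ℂ) :=
  {x | x 0 * x 2 - x 4 * x 1 ^ 2 = 0 ∧ x 1 * x 3 - x 2 ^ 2 = 0 ∧
    x 0 * x 3 - x 4 * (x 1 * x 2) = 0}

private lemma vanish_SF : ∀ y ∈ SF', y 0 * y 2 - y 4 * y 1 ^ 2 = 0 ∧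
    y 1 * y 3 - y 2 ^ 2 = 0 ∧ y 0 * y 3 - y 4 * (y 1 * y 2) = 0 := by
  rintro y ⟨c, t, l, hc, ht, rfl⟩
  refine ⟨?_, ?_, ?_⟩ <;> simp <;> ring

private lemma vanish_SG : ∀ y ∈ SG', y 0 * y 2 - y 4 * y 1 ^ 2 = 0 ∧
    y 1 * y 3 - y 2 ^ 2 = 0 ∧ y 0 * y 3 - y 4 * (y 1 * y 2) = 0 := by
  rintro y ⟨c, t, l, hc, ht, rfl⟩
  refine ⟨?_, ?_, ?_⟩ <;> simp <;> ring

private lemma zcl_sub {S : Set (Fin 5 → ℂ)}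
    (hS : ∀ y ∈ S, y 0 * y 2 - y 4 * y 1 ^ 2 = 0 ∧ y 1 * y 3 - y 2 ^ 2 = 0 ∧
      y 0 * y 3 - y 4 * (y 1 * y 2) = 0)
    (x : Fin 5 → ℂ)
    (hx : ∀ f : MvPolynomial (Fin 5) ℂ, (∀ y ∈ S, eval y f = 0) → eval x f = 0) :
    x ∈ V' := by
  refine ⟨?_, ?_, ?_⟩
  · have := hx (X 0 * X 2 - X 4 * X 1 ^ 2) (fun y hy => by simpa using (hS y hy).1)
    simpa using this
  · have := hx (X 1 * X 3 - X 2 ^ 2) (fun y hy => by simpa using (hS y hy).2.1)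
    simpa using this
  · have := hx (X 0 * X 3 - X 4 * (X 1 * X 2)) (fun y hy => by simpa using (hS y hy).2.2)
    simpa using this

private lemma cl_SF : {x | ∀ f : MvPolynomial (Fin 5) ℂ,
    (∀ y ∈ SF', eval y f = 0) → eval x f = 0} = V' := by
  ext x
  exact ⟨fun hx => zcl_sub vanish_SF x hx, fun ⟨h1, h2, h3⟩ f hf => dense_SF x h1 h2 h3 f hf⟩

private lemma cl_SG : {x | ∀ f : MvPolynomial (Fin 5) ℂ,
    (∀ y ∈ SG', eval y f = 0) → eval x f = 0} = V' := by
  ext x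
  exact ⟨fun hx => zcl_sub vanish_SG x hx, fun ⟨h1, h2, h3⟩ f hf => dense_SG x h1 h2 h3 f hf⟩

/-- The Zariski closures (in ℂ⁴ × ℂ, taken as affine cones over ℙ³ × ℂ) of the
images of the two parametrizations of the degenerating twisted cubic coincide,
and are cut out by x₀x₂ − ηx₁², x₁x₃ − x₂², x₀x₃ − ηx₁x₂. -/
theorem stmt_15 (SF SG : Set (Fin 5 → ℂ))
    (hSF : SF = {p | ∃ c t lam : ℂ, c ≠ 0 ∧ t ≠ 0 ∧
        p = ![c, c * t, c * lam * t ^ 2, c * lam ^ 2 * t ^ 3, lam]})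
    (hSG : SG = {p | ∃ c t lam : ℂ, c ≠ 0 ∧ t ≠ 0 ∧
        p = ![c * lam, c * t, c * t ^ 2, c * t ^ 3, lam]})
    (Zcl : Set (Fin 5 → ℂ) → Set (Fin 5 → ℂ))
    (hZcl : ∀ S, Zcl S = {x | ∀ f : MvPolynomial (Fin 5) ℂ,
        (∀ y ∈ S, MvPolynomial.eval y f = 0) → MvPolynomial.eval x f = 0}) :
    Zcl SF = Zcl SG ∧
      Zcl SF = {x : Fin 5 → ℂ | x 0 * x 2 - x 4 * x 1 ^ 2 = 0 ∧
        x 1 * x 3 - x 2 ^ 2 = 0 ∧ x 0 * x 3 - x 4 * (x 1 * x 2) = 0} := by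
  have e1 : Zcl SF = V' := by rw [hZcl, hSF]; exact cl_SF
  have e2 : Zcl SG = V' := by rw [hZcl, hSG]; exact cl_SG
  exact ⟨e1.trans e2.symm, e1⟩
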